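/- Let g : (0, +∞) → ℝ be differentiable with g(s) > 0, g'(s) > 0 for all s, and suppose s·g(s)·g'(s) = g(s)³ + g(s)² + λ·g(s) + μ for constants λ, μ ∈ ℝ with the right-hand side positive for all s. Then such g cannot exist; i.e., there is no positive strictly increasing differentiable solution on all of (0, +∞). -/

import Mathlib

open Set

private lemma key12 {f : ℝ → ℝ} {c a b : ℝ} (hab : a ≤ b) (ha : 0 < a)
    (hf : ∀ s ∈ Set.Icc a b, ∃ d, HasDerivAt f d s ∧ c / s ≤ d) :
    f a + c * (Real.log b - Real.log a) ≤ f b := by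
  set φ : ℝ → ℝ := fun s => f s - c * Real.log s with hφ
  have hder : ∀ s ∈ Set.Icc a b, ∃ d, HasDerivAt φ d s ∧ 0 ≤ d := by
    intro s hs
    obtain ⟨d, hd, hcd⟩ := hf s hs
    have hs0 : 0 < s := lt_of_lt_of_le ha hs.1
    refine ⟨d - c * s⁻¹, hd.sub ((Real.hasDerivAt_log hs0.ne').const_mul c), ?_⟩
    have : c / s = c * s⁻¹ := div_eq_mul_inv c s
    linarith [this ▸ hcd]
  have hmono : MonotoneOn φ (Set.Icc a b) := by
    apply monotoneOn_of_deriv_nonneg (convex_Icc a b)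
    · intro s hs
      obtain ⟨d, hd, _⟩ := hder s hs
      exact hd.differentiableAt.continuousAt.continuousWithinAt
    · intro s hs
      rw [interior_Icc] at hs
      obtain ⟨d, hd, _⟩ := hder s (Ioo_subset_Icc_self hs)
      exact hd.differentiableAt.differentiableWithinAt
    · intro s hs
      rw [interior_Icc] at hs
      obtain ⟨d, hd, hd0⟩ := hder s (Ioo_subset_Icc_self hs)
      rw [hd.deriv]; exact hd0
  have := hmono (left_mem_Icc.2 hab) (right_mem_Icc.2 hab) hab
  simp only [hφ] at this
  linarith

private lemma cubic_no12 {lam mu m L t0 : ℝ} (hm : 0 ≤ m) (h1 : m < t0) (h2 : t0 < L)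
    (hPm : m^3+m^2+lam*m+mu ≤ 0) (hPL : L^3+L^2+lam*L+mu ≤ 0)
    (hPt : 0 < t0^3+t0^2+lam*t0+mu) : False := by
  set P : ℝ → ℝ := fun t => t^3+t^2+lam*t+mu with hP
  have hcont : ∀ u v : ℝ, ContinuousOn P (Icc u v) := by
    intro u v; fun_prop
  have h0m : (0:ℝ) ∈ Icc (P m) (P t0) := ⟨hPm, hPt.le⟩
  obtain ⟨m', hm'mem, hm'⟩ := intermediate_value_Icc h1.le (hcont m t0) h0m
  have h0L : (0:ℝ) ∈ Icc (P L) (P t0) := ⟨hPL, hPt.le⟩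
  obtain ⟨L', hL'mem, hL'⟩ := intermediate_value_Icc' h2.le (hcont t0 L) h0L
  have hm't : m' < t0 := lt_of_le_of_ne hm'mem.2 (fun h => by simp [hP, h] at hm'; linarith)
  have htL' : t0 < L' := lt_of_le_of_ne (hL'mem.1) (fun h => by simp [hP, ← h] at hL'; linarith)
  have hm'0 : 0 ≤ m' := le_trans hm hm'mem.1
  have hne : m' - L' ≠ 0 := by intro h; linarith [sub_eq_zero.mp h]
  simp only [hP] at hm' hL'
  have key0 : (m' - L') * ((t0^3+t0^2+lam*t0+mu) - (t0 - m') * (t0 - L') * (t0 + m' + L' + 1)) = 0 := by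
    linear_combination (t0 - L') * hm' - (t0 - m') * hL'
  have hfact : t0^3+t0^2+lam*t0+mu = (t0 - m') * (t0 - L') * (t0 + m' + L' + 1) := by
    rcases mul_eq_zero.mp key0 with h | h
    · exact absurd h hne
    · linarith [sub_eq_zero.mp h]
  nlinarith [mul_pos (by linarith : (0:ℝ) < t0 - m') (by linarith : (0:ℝ) < t0 + m' + L' + 1), hfact, hPt]

set_option maxHeartbeats 1000000 in
theorem stmt_12 (lam mu : ℝ) :
    ¬ ∃ g : ℝ → ℝ,
      (∀ s, 0 < s → DifferentiableAt ℝ g s) ∧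
      (∀ s, 0 < s → 0 < g s) ∧
      (∀ s, 0 < s → 0 < deriv g s) ∧
      (∀ s, 0 < s → 0 < (g s)^3 + (g s)^2 + lam * g s + mu) ∧
      (∀ s, 0 < s → s * g s * deriv g s = (g s)^3 + (g s)^2 + lam * g s + mu) := by
  rintro ⟨g, hdiff, hpos, hder, hPpos, heq⟩
  -- g is strictly monotone on (0,∞)
  have hsm : StrictMonoOn g (Ioi 0) := by
    apply strictMonoOn_of_deriv_pos (convex_Ioi 0)
    · exact fun s hs => (hdiff s hs).continuousAt.continuousWithinAt
    · intro x hx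
      rw [interior_Ioi] at hx
      exact hder x hx
  have hmonole : ∀ ⦃u v : ℝ⦄, 0 < u → u ≤ v → g u ≤ g v := by
    intro u v hu huv
    exact hsm.monotoneOn (mem_Ioi.2 hu) (mem_Ioi.2 (lt_of_lt_of_le hu huv)) huv
  have hSne : (g '' Ioi 0).Nonempty := ⟨g 1, ⟨1, by norm_num, rfl⟩⟩
  have hSbb : BddBelow (g '' Ioi 0) := ⟨0, fun y ⟨x, hx, hxy⟩ => hxy ▸ (hpos x hx).le⟩
  by_cases hbdd : BddAbove (g '' Ioi 0)
  · -- bounded case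
    obtain ⟨L, hLdef⟩ : ∃ L : ℝ, L = sSup (g '' Ioi 0) := ⟨_, rfl⟩
    obtain ⟨m, hmdef⟩ : ∃ m : ℝ, m = sInf (g '' Ioi 0) := ⟨_, rfl⟩
    have hgleL : ∀ s, 0 < s → g s ≤ L := fun s hs => hLdef ▸ le_csSup hbdd ⟨s, hs, rfl⟩
    have hmleg : ∀ s, 0 < s → m ≤ g s := fun s hs => hmdef ▸ csInf_le hSbb ⟨s, hs, rfl⟩
    have hm0 : 0 ≤ m := hmdef ▸ le_csInf hSne (fun y ⟨x, hx, hxy⟩ => hxy ▸ (hpos x hx).le)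
    have hLpos : 0 < L := lt_of_lt_of_le (hpos 1 one_pos) (hgleL 1 one_pos)
    have hPcont : Continuous (fun t : ℝ => t^3 + t^2 + lam*t + mu) := by fun_prop
    -- claim 1 : P L ≤ 0
    have hPL : L^3 + L^2 + lam*L + mu ≤ 0 := by
      by_contra hp
      push_neg at hp
      obtain ⟨p, hpdef⟩ : ∃ p : ℝ, p = L^3 + L^2 + lam*L + mu := ⟨_, rfl⟩
      have hp0 : 0 < p := hpdef ▸ hp
      obtain ⟨δ, hδ0, hδ⟩ := Metric.continuousAt_iff.1 (hPcont.continuousAt (x := L)) (p/2) (by linarith)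
      obtain ⟨y, ⟨s₂, hs₂0, rfl⟩, hy⟩ := exists_lt_of_lt_csSup hSne (hLdef ▸ show L - δ < L by linarith)
      have hy' : L - δ < g s₂ := by rw [hLdef]; exact hy
      obtain ⟨c, hcdef⟩ : ∃ c : ℝ, c = p / (2 * L) := ⟨_, rfl⟩
      have hc0 : 0 < c := hcdef ▸ by positivity
      have hs₂0' : (0:ℝ) < s₂ := hs₂0
      obtain ⟨b, hbdef⟩ : ∃ b : ℝ, b = Real.exp ((L + 1 - g s₂)/c + Real.log s₂) := ⟨_, rfl⟩
      have hs₂b : s₂ ≤ b := by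
        have h0 : 0 ≤ (L + 1 - g s₂)/c := by
          apply div_nonneg _ hc0.le
          linarith [hgleL s₂ hs₂0']
        have h1 := Real.exp_le_exp.2 (show Real.log s₂ ≤ (L + 1 - g s₂)/c + Real.log s₂ by linarith)
        rw [Real.exp_log hs₂0'] at h1
        exact hbdef ▸ h1
      have hkey := key12 (f := g) (c := c) (a := s₂) (b := b) hs₂b hs₂0' ?_
      · rw [hbdef, Real.log_exp] at hkey
        have hgb : g b ≤ L := hgleL b (lt_of_lt_of_le hs₂0' hs₂b)
        rw [show (L + 1 - g s₂)/c + Real.log s₂ - Real.log s₂ = (L + 1 - g s₂)/c by ring] at hkey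
        rw [mul_div_cancel₀ _ hc0.ne'] at hkey
        rw [← hbdef] at hkey
        linarith
      · intro u hu
        have hu0 : 0 < u := lt_of_lt_of_le hs₂0' hu.1
        refine ⟨deriv g u, (hdiff u hu0).hasDerivAt, ?_⟩
        have hgu1 : g s₂ ≤ g u := hmonole hs₂0' hu.1
        have hgu2 : g u ≤ L := hgleL u hu0
        have hdist : dist (g u) L < δ := by
          rw [Real.dist_eq, abs_lt]
          constructor <;> linarith
        have hPu := hδ hdist
        rw [Real.dist_eq, abs_lt] at hPu
        have hPu2 : p/2 < (g u)^3 + (g u)^2 + lam * g u + mu := by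
          linarith [hPu.1, hpdef]
        have heu := heq u hu0
        have hgu0 : 0 < g u := hpos u hu0
        rw [div_le_iff₀ hu0]
        have h1 : c * L = p / 2 := by
          rw [hcdef]; field_simp
        have h5 : c * g u < (deriv g u * u) * g u := by
          nlinarith [mul_nonneg hc0.le (sub_nonneg.2 hgu2), h1, heu, hPu2]
        exact (lt_of_mul_lt_mul_right h5 hgu0.le).le
    -- claim 2 : P m ≤ 0
    have hPm : m^3 + m^2 + lam*m + mu ≤ 0 := by
      by_contra hp
      push_neg at hp
      obtain ⟨p, hpdef⟩ : ∃ p : ℝ, p = m^3 + m^2 + lam*m + mu := ⟨_, rfl⟩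
      have hp0 : 0 < p := hpdef ▸ hp
      obtain ⟨δ, hδ0, hδ⟩ := Metric.continuousAt_iff.1 (hPcont.continuousAt (x := m)) (p/2) (by linarith)
      obtain ⟨y, ⟨s₃, hs₃0, rfl⟩, hy⟩ := exists_lt_of_csInf_lt hSne (hmdef ▸ show m < m + δ by linarith)
      have hy' : g s₃ < m + δ := by rw [hmdef]; exact hy
      obtain ⟨c, hcdef⟩ : ∃ c : ℝ, c = p / (2 * (m + δ)) := ⟨_, rfl⟩
      have hmδ : 0 < m + δ := by linarith
      have hc0 : 0 < c := hcdef ▸ by positivity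
      have hs₃0' : (0:ℝ) < s₃ := hs₃0
      obtain ⟨a, hadef⟩ : ∃ a : ℝ, a = min s₃ (Real.exp (Real.log s₃ - g s₃/c - 1)) := ⟨_, rfl⟩
      have ha0 : 0 < a := hadef ▸ lt_min hs₃0' (Real.exp_pos _)
      have has₃ : a ≤ s₃ := hadef ▸ min_le_left _ _
      have hloga : Real.log a ≤ Real.log s₃ - g s₃/c - 1 := by
        calc Real.log a ≤ Real.log (Real.exp (Real.log s₃ - g s₃/c - 1)) :=
              Real.log_le_log ha0 (hadef ▸ min_le_right _ _)
          _ = _ := Real.log_exp _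
      have hkey := key12 (f := g) (c := c) (a := a) (b := s₃) has₃ ha0 ?_
      · have hga : 0 < g a := hpos a ha0
        have hmul : c * (g s₃/c + 1) ≤ c * (Real.log s₃ - Real.log a) := by
          apply mul_le_mul_of_nonneg_left _ hc0.le
          linarith
        rw [mul_add, mul_div_cancel₀ _ hc0.ne'] at hmul
        linarith
      · intro u hu
        have hu0 : 0 < u := lt_of_lt_of_le ha0 hu.1
        refine ⟨deriv g u, (hdiff u hu0).hasDerivAt, ?_⟩
        have hgu1 : m ≤ g u := hmleg u hu0
        have hgu2 : g u ≤ g s₃ := hmonole hu0 hu.2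
        have hdist : dist (g u) m < δ := by
          rw [Real.dist_eq, abs_lt]
          constructor <;> linarith
        have hPu := hδ hdist
        rw [Real.dist_eq, abs_lt] at hPu
        have hPu2 : p/2 < (g u)^3 + (g u)^2 + lam * g u + mu := by
          linarith [hPu.1, hpdef]
        have heu := heq u hu0
        have hgu0 : 0 < g u := hpos u hu0
        rw [div_le_iff₀ hu0]
        have h1 : c * (m + δ) = p / 2 := by
          rw [hcdef]; field_simp
        have hguδ : g u < m + δ := by linarith
        have h5 : c * g u < (deriv g u * u) * g u := by
          nlinarith [mul_lt_mul_of_pos_left hguδ hc0, h1, heu, hPu2]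
        exact (lt_of_mul_lt_mul_right h5 hgu0.le).le
    -- now use the cubic lemma with t0 = g 1
    have h1 : m < g 1 := lt_of_le_of_lt (hmleg (1/2) (by norm_num))
      (hsm (by norm_num : (1:ℝ)/2 ∈ Ioi 0) (by norm_num : (1:ℝ) ∈ Ioi 0) (by norm_num))
    have h2 : g 1 < L := lt_of_lt_of_le
      (hsm (by norm_num : (1:ℝ) ∈ Ioi 0) (by norm_num : (2:ℝ) ∈ Ioi 0) (by norm_num))
      (hgleL 2 (by norm_num))
    exact cubic_no12 hm0 h1 h2 hPm hPL (hPpos 1 one_pos)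
  · -- unbounded case
    rw [not_bddAbove_iff] at hbdd
    obtain ⟨y, ⟨s₁, hs₁0, rfl⟩, hy⟩ := hbdd (2 + 2*|lam| + 2*|mu|)
    have hs₁0' : (0:ℝ) < s₁ := hs₁0
    obtain ⟨b, hbdef⟩ : ∃ b : ℝ, b = Real.exp (Real.log s₁ + 2 / g s₁ + 2) := ⟨_, rfl⟩
    have hgs₁ : 0 < g s₁ := hpos s₁ hs₁0'
    have hs₁b : s₁ ≤ b := by
      have h0 : 0 < 2 / g s₁ := by positivity
      have h1 := Real.exp_le_exp.2 (show Real.log s₁ ≤ Real.log s₁ + 2 / g s₁ + 2 by linarith)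
      rw [Real.exp_log hs₁0'] at h1
      exact hbdef ▸ h1
    have hkey := key12 (f := fun s => -(g s)⁻¹) (c := 1/2) (a := s₁) (b := b) hs₁b hs₁0' ?_
    · rw [hbdef, Real.log_exp] at hkey
      have hgb : 0 < g b := hpos b (lt_of_lt_of_le hs₁0' hs₁b)
      have h1 : -(g b)⁻¹ < 0 := neg_neg_iff_pos.mpr (by positivity)
      have h2 : (0:ℝ) < (g s₁)⁻¹ := by positivity
      have h3 : (1:ℝ)/2 * (Real.log s₁ + 2 / g s₁ + 2 - Real.log s₁) = (g s₁)⁻¹ + 1 := by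
        rw [show Real.log s₁ + 2 / g s₁ + 2 - Real.log s₁ = 2 / g s₁ + 2 by ring]
        rw [div_eq_mul_inv 2 (g s₁)]
        ring
      rw [h3] at hkey
      rw [← hbdef] at hkey
      linarith
    · intro u hu
      have hu0 : 0 < u := lt_of_lt_of_le hs₁0' hu.1
      have hgu0 : 0 < g u := hpos u hu0
      have hgub : 2 + 2*|lam| + 2*|mu| < g u := lt_of_lt_of_le hy (hmonole hs₁0' hu.1)
      refine ⟨-(-deriv g u / (g u)^2), ((hdiff u hu0).hasDerivAt.inv hgu0.ne').neg, ?_⟩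
      rw [neg_div, neg_neg]
      have hP34 : (g u)^3 / 2 ≤ (g u)^3 + (g u)^2 + lam * g u + mu := by
        have hA : 0 ≤ |lam| := abs_nonneg lam
        have hB : 0 ≤ |mu| := abs_nonneg mu
        have ht2 : 2 ≤ g u := by linarith
        nlinarith [mul_nonneg (by linarith : (0:ℝ) ≤ g u - 2 - 2*|lam| - 2*|mu|) (sq_nonneg (g u)),
          mul_nonneg hA (by nlinarith : (0:ℝ) ≤ (g u)^2 - g u),
          mul_nonneg hB (by nlinarith : (0:ℝ) ≤ (g u)^2 - 1),
          le_abs_self lam, neg_abs_le lam, le_abs_self mu, neg_abs_le mu]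
      have heu := heq u hu0
      have hsq : 0 < (g u)^2 := by positivity
      rw [div_le_div_iff₀ hu0 hsq]
      have h5 : g u * (g u ^ 2 / 2) ≤ g u * (u * deriv g u) := by
        nlinarith [heu, hP34, sq_nonneg (g u)]
      have h6 := le_of_mul_le_mul_left h5 hgu0
      linarith
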